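/- arXiv:cs/0611106 — 3 statements merged into one kernel-verified Lean document; each statement's English description precedes it below -/
import Mathlib

section
/- Let p(y) = Σ_{n=1}^N π_n K_n(y) be a mixture density with π_n > 0 summing to 1, each K_n bounded (sup K_n < ∞), and let Ω_1,…,Ω_N be pairwise disjoint measurable subsets of ℝ. Define ε_n = ∫_{ℝ∖Ω_n} K_n(y) dy and ε'_n = ∫_{ℝ∖Ω_n} K_n(y) log(sup K_n / K_n(y)) dy. Then H(p) ≥ Σ_n π_n H(K_n) + h(π) − Σ_n π_n ε'_n − Σ_n π_n [log(max_m sup K_m / (π_n sup K_n)) + 1] ε_n. -/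
open MeasureTheory Real

/-- Entropy lower bound for a mixture density with nearly-disjoint modes. -/
theorem mixture_entropy_lower_bound
    (N : ℕ) (hN : 0 < N) (w : Fin N → ℝ) (K : Fin N → ℝ → ℝ)
    (hwpos : ∀ n, 0 < w n) (hwsum : ∑ n, w n = 1)
    (hKnonneg : ∀ n y, 0 ≤ K n y)
    (hKdens : ∀ n, ∫ y, K n y = 1)
    (hKbdd : ∀ n, BddAbove (Set.range (K n)))
    (hKent : ∀ n, Integrable (fun y => K n y * Real.log (K n y)))
    (Ω : Fin N → Set ℝ) (hΩmeas : ∀ n, MeasurableSet (Ω n))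
    (hΩdisj : ∀ n m, n ≠ m → Disjoint (Ω n) (Ω m))
    (ε ε' : Fin N → ℝ)
    (hε : ∀ n, ε n = ∫ y in (Ω n)ᶜ, K n y)
    (hε' : ∀ n, ε' n = ∫ y in (Ω n)ᶜ, K n y * Real.log ((⨆ x, K n x) / K n y))
    (p : ℝ → ℝ) (hp : ∀ y, p y = ∑ n, w n * K n y)
    (hpent : Integrable (fun y => p y * Real.log (p y))) :
    (∑ n, w n * (-∫ y, K n y * Real.log (K n y))) + (-∑ n, w n * Real.log (w n))
        - (∑ n, w n * ε' n)
        - (∑ n, w n * (Real.log ((⨆ m, ⨆ x, K m x) / (w n * ⨆ x, K n x)) + 1) * ε n)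
      ≤ -∫ y, p y * Real.log (p y) := by
  haveI : NeZero N := ⟨hN.ne'⟩
  have hKle : ∀ n y, K n y ≤ ⨆ x, K n x := fun n y => le_ciSup (hKbdd n) y
  have hKint : ∀ n, Integrable (K n) := by
    intro n
    by_contra h
    have := hKdens n
    rw [MeasureTheory.integral_undef h] at this
    exact one_ne_zero this.symm
  -- positivity of the sups
  have hSpos : ∀ n, 0 < ⨆ x, K n x := by
    intro n
    by_contra h
    push_neg at h
    have hz : ∀ y, K n y = 0 := fun y => le_antisymm ((hKle n y).trans h) (hKnonneg n y)
    have : (∫ y, K n y) = 0 := by simp [hz]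
    rw [hKdens n] at this
    exact one_ne_zero this
  have hMbdd : BddAbove (Set.range fun m : Fin N => ⨆ x, K m x) :=
    (Set.finite_range _).bddAbove
  have hSM : ∀ n, (⨆ x, K n x) ≤ ⨆ m, ⨆ x, K m x := fun n => le_ciSup hMbdd n
  have hMpos : 0 < ⨆ m, ⨆ x, K m x :=
    lt_of_lt_of_le (hSpos ⟨0, hN⟩) (hSM ⟨0, hN⟩)
  -- basic facts about p
  have hpint : Integrable p := by
    have : Integrable (fun y => ∑ n, w n * K n y) :=
      integrable_finset_sum _ (fun n _ => (hKint n).const_mul (w n))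
    exact this.congr (Filter.EventuallyEq.of_eq (funext fun y => (hp y).symm))
  have hpnn : ∀ y, 0 ≤ p y := by
    intro y
    rw [hp y]
    exact Finset.sum_nonneg fun n _ => mul_nonneg (hwpos n).le (hKnonneg n y)
  have hwKp : ∀ n y, w n * K n y ≤ p y := by
    intro n y
    rw [hp y]
    exact Finset.single_le_sum (fun m _ => mul_nonneg (hwpos m).le (hKnonneg m y))
      (Finset.mem_univ n)
  have hpM : ∀ y, p y ≤ ⨆ m, ⨆ x, K m x := by
    intro y
    rw [hp y]
    calc ∑ n, w n * K n y ≤ ∑ n, w n * (⨆ m, ⨆ x, K m x) := by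
          refine Finset.sum_le_sum fun n _ => ?_
          exact mul_le_mul_of_nonneg_left ((hKle n y).trans (hSM n)) (hwpos n).le
      _ = ⨆ m, ⨆ x, K m x := by rw [← Finset.sum_mul, hwsum, one_mul]
  -- integrability of K n * log p
  have hKlogp : ∀ n, Integrable (fun y => K n y * Real.log (p y)) := by
    intro n
    have hmeas : AEStronglyMeasurable (fun y => K n y * Real.log (p y)) volume := by
      exact ((hKint n).aestronglyMeasurable.aemeasurable.mul
        (Real.measurable_log.comp_aemeasurable hpint.aemeasurable)).aestronglyMeasurable
    have hbint : Integrable (fun y =>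
        (1 / w n) * |p y * Real.log (p y)| + max (Real.log (⨆ m, ⨆ x, K m x)) 0 * K n y) :=
      (hpent.abs.const_mul _).add ((hKint n).const_mul _)
    refine hbint.mono hmeas (Filter.Eventually.of_forall fun y => ?_)
    simp only [Real.norm_eq_abs]
    have hKy := hKnonneg n y
    have hw := hwpos n
    have hb1 : 0 ≤ 1 / w n * |p y * Real.log (p y)| :=
      mul_nonneg (one_div_nonneg.mpr hw.le) (abs_nonneg _)
    have hb2 : 0 ≤ max (Real.log (⨆ m, ⨆ x, K m x)) 0 * K n y :=
      mul_nonneg (le_max_right _ _) hKy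
    rw [abs_of_nonneg (by linarith :
      (0:ℝ) ≤ 1 / w n * |p y * Real.log (p y)| + max (Real.log (⨆ m, ⨆ x, K m x)) 0 * K n y)]
    rcases eq_or_lt_of_le hKy with h0 | hKpos
    · rw [← h0, zero_mul, abs_zero]
      linarith
    have hppos : 0 < p y := lt_of_lt_of_le (mul_pos hw hKpos) (hwKp n y)
    rcases le_or_gt (p y) 1 with hple | hpgt
    · have hlog : Real.log (p y) ≤ 0 := Real.log_nonpos hppos.le hple
      have e1 : |K n y * Real.log (p y)| = K n y * -Real.log (p y) := by
        rw [abs_mul, abs_of_nonneg hKy, abs_of_nonpos hlog]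
      have e2 : |p y * Real.log (p y)| = p y * -Real.log (p y) := by
        rw [abs_mul, abs_of_nonneg (hpnn y), abs_of_nonpos hlog]
      have hKp : K n y ≤ p y / w n := by
        rw [le_div_iff₀ hw, mul_comm]
        exact hwKp n y
      have h3 : K n y * -Real.log (p y) ≤ p y / w n * -Real.log (p y) :=
        mul_le_mul_of_nonneg_right hKp (by linarith)
      have h4 : p y / w n * -Real.log (p y) = 1 / w n * (p y * -Real.log (p y)) := by ring
      rw [e1]
      rw [h4] at h3
      rw [← e2] at h3
      linarith
    · have hlogpos : 0 < Real.log (p y) := Real.log_pos hpgt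
      rw [abs_of_nonneg (mul_nonneg hKy hlogpos.le)]
      have h5 : K n y * Real.log (p y) ≤ max (Real.log (⨆ m, ⨆ x, K m x)) 0 * K n y := by
        rw [mul_comm]
        exact mul_le_mul_of_nonneg_right
          ((Real.log_le_log hppos (hpM y)).trans (le_max_left _ _)) hKy
      linarith
  -- pointwise identities
  have ptE : ∀ n y, K n y * Real.log (w n * K n y)
      = K n y * Real.log (w n) + K n y * Real.log (K n y) := by
    intro n y
    rcases eq_or_lt_of_le (hKnonneg n y) with h0 | hpos
    · rw [← h0]; ring
    · rw [Real.log_mul (hwpos n).ne' hpos.ne']; ring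
  have ptF : ∀ n y, K n y * Real.log (K n y)
      = K n y * Real.log (⨆ x, K n x) - K n y * Real.log ((⨆ x, K n x) / K n y) := by
    intro n y
    rcases eq_or_lt_of_le (hKnonneg n y) with h0 | hpos
    · rw [← h0]; ring
    · rw [Real.log_div (hSpos n).ne' hpos.ne']; ring
  -- integrability of the sup-ratio integrand
  have hratio_int : ∀ n, Integrable (fun y => K n y * Real.log ((⨆ x, K n x) / K n y)) := by
    intro n
    have : (fun y => K n y * Real.log ((⨆ x, K n x) / K n y))
        = fun y => K n y * Real.log (⨆ x, K n x) - K n y * Real.log (K n y) := by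
      funext y
      have := ptF n y
      linarith
    rw [this]
    exact ((hKint n).mul_const _).sub (hKent n)
  -- mass splitting: ∫_{Ω n} K n = 1 - ε n
  have hmass : ∀ n, ∫ y in Ω n, K n y = 1 - ε n := by
    intro n
    have := integral_add_compl (hΩmeas n) (hKint n)
    rw [hKdens n] at this
    rw [hε n]
    linarith
  -- Step (c): tail term
  have stepC : ∀ n, ∫ y in (Ω n)ᶜ, K n y * Real.log (p y)
      ≤ Real.log (⨆ m, ⨆ x, K m x) * ε n := by
    intro n
    have hpt : ∀ y, K n y * Real.log (p y) ≤ K n y * Real.log (⨆ m, ⨆ x, K m x) := by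
      intro y
      rcases eq_or_lt_of_le (hKnonneg n y) with h0 | hpos
      · rw [← h0]; simp
      · have hppos : 0 < p y := lt_of_lt_of_le (mul_pos (hwpos n) hpos) (hwKp n y)
        exact mul_le_mul_of_nonneg_left (Real.log_le_log hppos (hpM y)) (hKnonneg n y)
    calc ∫ y in (Ω n)ᶜ, K n y * Real.log (p y)
        ≤ ∫ y in (Ω n)ᶜ, K n y * Real.log (⨆ m, ⨆ x, K m x) :=
          setIntegral_mono (hKlogp n).integrableOn ((hKint n).mul_const _).integrableOn hpt
      _ = (∫ y in (Ω n)ᶜ, K n y) * Real.log (⨆ m, ⨆ x, K m x) := integral_mul_const _ _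
      _ = Real.log (⨆ m, ⨆ x, K m x) * ε n := by rw [← hε n]; ring
  -- Step (f): ∫_{Ω n} K log K = ∫ K log K - (ε log S - ε')
  have stepF : ∀ n, ∫ y in Ω n, K n y * Real.log (K n y)
      = (∫ y, K n y * Real.log (K n y)) - ε n * Real.log (⨆ x, K n x) + ε' n := by
    intro n
    have hsplit := integral_add_compl (hΩmeas n) (hKent n)
    have htail : ∫ y in (Ω n)ᶜ, K n y * Real.log (K n y)
        = ε n * Real.log (⨆ x, K n x) - ε' n := by
      have : ∫ y in (Ω n)ᶜ, K n y * Real.log (K n y)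
          = ∫ y in (Ω n)ᶜ, (K n y * Real.log (⨆ x, K n x)
              - K n y * Real.log ((⨆ x, K n x) / K n y)) := by
        apply setIntegral_congr_fun (hΩmeas n).compl
        intro y _
        exact ptF n y
      rw [this, integral_sub (((hKint n).mul_const _).integrableOn)
            ((hratio_int n).integrableOn), integral_mul_const, ← hε n, ← hε' n]
    linarith
  -- Step (d): head term bound
  have stepD : ∀ n, ∫ y in Ω n, K n y * Real.log (p y)
      ≤ (∫ y in Ω n, K n y * Real.log (K n y)) + Real.log (w n) * (1 - ε n)
        + (∫ y in Ω n, p y) / w n - (1 - ε n) := by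
    intro n
    have hpt : ∀ y, K n y * Real.log (p y)
        ≤ K n y * Real.log (w n) + K n y * Real.log (K n y) + p y / w n - K n y := by
      intro y
      rcases eq_or_lt_of_le (hKnonneg n y) with h0 | hpos
      · rw [← h0]
        simp only [zero_mul, mul_zero, zero_add, add_zero, sub_zero]
        exact div_nonneg (hpnn y) (hwpos n).le
      · have hwK : 0 < w n * K n y := mul_pos (hwpos n) hpos
        have hppos : 0 < p y := lt_of_lt_of_le hwK (hwKp n y)
        have hlog : Real.log (p y) ≤ Real.log (w n * K n y) + (p y / (w n * K n y) - 1) := by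
          have h1 : Real.log (p y / (w n * K n y)) ≤ p y / (w n * K n y) - 1 :=
            Real.log_le_sub_one_of_pos (div_pos hppos hwK)
          rw [Real.log_div hppos.ne' hwK.ne'] at h1
          linarith
        have h2 : K n y * Real.log (p y)
            ≤ K n y * (Real.log (w n * K n y) + (p y / (w n * K n y) - 1)) :=
          mul_le_mul_of_nonneg_left hlog hpos.le
        have h3 : K n y * (p y / (w n * K n y)) = p y / w n := by
          field_simp [(hwpos n).ne', hpos.ne']
        have h4 := ptE n y
        nlinarith [h2, h3, h4]
    have hle : ∫ y in Ω n, K n y * Real.log (p y)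
        ≤ ∫ y in Ω n, (K n y * Real.log (w n) + K n y * Real.log (K n y) + p y / w n - K n y) := by
      refine setIntegral_mono (hKlogp n).integrableOn ?_ hpt
      exact ((((hKint n).mul_const _).add (hKent n)).add (hpint.div_const _)).sub
        (hKint n) |>.integrableOn
    have hsplit : ∫ y in Ω n, (K n y * Real.log (w n) + K n y * Real.log (K n y)
          + p y / w n - K n y)
        = (∫ y in Ω n, K n y) * Real.log (w n) + (∫ y in Ω n, K n y * Real.log (K n y))
          + (∫ y in Ω n, p y) / w n - ∫ y in Ω n, K n y := by
      have iA : IntegrableOn (fun y => K n y * Real.log (w n)) (Ω n) volume :=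
        ((hKint n).mul_const _).integrableOn
      have iB : IntegrableOn (fun y => K n y * Real.log (K n y)) (Ω n) volume :=
        (hKent n).integrableOn
      have iC : IntegrableOn (fun y => p y / w n) (Ω n) volume :=
        (hpint.div_const _).integrableOn
      have iAB : IntegrableOn
          (fun y => K n y * Real.log (w n) + K n y * Real.log (K n y)) (Ω n) volume := iA.add iB
      have iABC : IntegrableOn
          (fun y => K n y * Real.log (w n) + K n y * Real.log (K n y) + p y / w n)
          (Ω n) volume := iAB.add iC
      rw [integral_sub iABC (hKint n).integrableOn, integral_add iAB iC,
          integral_add iA iB, integral_mul_const, integral_div]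
    rw [hsplit, hmass n] at hle
    linarith [hle]
  -- per-component bound on the whole line
  have stepN : ∀ n, ∫ y, K n y * Real.log (p y)
      ≤ (∫ y, K n y * Real.log (K n y)) + ε' n - ε n * Real.log (⨆ x, K n x)
        + Real.log (w n) * (1 - ε n) + Real.log (⨆ m, ⨆ x, K m x) * ε n
        + ((∫ y in Ω n, p y) / w n - (1 - ε n)) := by
    intro n
    have hsplit := integral_add_compl (hΩmeas n) (hKlogp n)
    have hD := stepD n
    have hC := stepC n
    have hF := stepF n
    rw [hF] at hD
    linarith
  -- leakage: total mass of p inside the union of the Ω's is at most 1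
  have hPsum : ∑ n, ∫ y in Ω n, p y ≤ 1 := by
    have hbi : ∫ y in ⋃ n ∈ (Finset.univ : Finset (Fin N)), Ω n, p y
        = ∑ n, ∫ y in Ω n, p y := by
      refine integral_biUnion_finset Finset.univ (fun n _ => hΩmeas n) ?_
        (fun n _ => hpint.integrableOn)
      intro a _ b _ hab
      exact hΩdisj a b hab
    have hle : ∫ y in ⋃ n ∈ (Finset.univ : Finset (Fin N)), Ω n, p y ≤ ∫ y, p y :=
      setIntegral_le_integral hpint (Filter.Eventually.of_forall hpnn)
    have hptot : ∫ y, p y = 1 := by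
      have : ∫ y, p y = ∑ n, w n * ∫ y, K n y := by
        rw [show (fun y => p y) = fun y => ∑ n, w n * K n y from funext hp]
        rw [integral_finset_sum _ (fun n _ => (hKint n).const_mul (w n))]
        simp [integral_const_mul]
      rw [this]
      simp only [hKdens, mul_one]
      exact hwsum
    rw [← hbi, ← hptot]
    exact hle
  -- mixture decomposition of the entropy integral
  have hdecomp : ∫ y, p y * Real.log (p y) = ∑ n, w n * ∫ y, K n y * Real.log (p y) := by
    have : (fun y => p y * Real.log (p y))
        = fun y => ∑ n, w n * (K n y * Real.log (p y)) := by
      funext y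
      rw [hp y, Finset.sum_mul]
      congr 1
      funext n
      ring
    rw [this, integral_finset_sum _ (fun n _ => ((hKlogp n).const_mul (w n)))]
    congr 1
    funext n
    exact integral_const_mul _ _
  -- combine
  have key : ∫ y, p y * Real.log (p y)
      ≤ (∑ n, w n * ∫ y, K n y * Real.log (K n y)) + (∑ n, w n * Real.log (w n))
        + (∑ n, w n * ε' n)
        + ∑ n, w n * (Real.log ((⨆ m, ⨆ x, K m x) / (w n * ⨆ x, K n x)) + 1) * ε n := by
    rw [hdecomp]
    have h1 : ∑ n, w n * ∫ y, K n y * Real.log (p y)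
        ≤ ∑ n, w n * ((∫ y, K n y * Real.log (K n y)) + ε' n
            - ε n * Real.log (⨆ x, K n x) + Real.log (w n) * (1 - ε n)
            + Real.log (⨆ m, ⨆ x, K m x) * ε n
            + ((∫ y in Ω n, p y) / w n - (1 - ε n))) :=
      Finset.sum_le_sum fun n _ => mul_le_mul_of_nonneg_left (stepN n) (hwpos n).le
    have hlogsplit : ∀ n, Real.log ((⨆ m, ⨆ x, K m x) / (w n * ⨆ x, K n x))
        = Real.log (⨆ m, ⨆ x, K m x) - Real.log (w n) - Real.log (⨆ x, K n x) := by
      intro n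
      rw [Real.log_div hMpos.ne' (mul_pos (hwpos n) (hSpos n)).ne', Real.log_mul (hwpos n).ne' (hSpos n).ne']
      ring
    have hper : ∀ n, w n * ((∫ y, K n y * Real.log (K n y)) + ε' n
            - ε n * Real.log (⨆ x, K n x) + Real.log (w n) * (1 - ε n)
            + Real.log (⨆ m, ⨆ x, K m x) * ε n
            + ((∫ y in Ω n, p y) / w n - (1 - ε n)))
        = w n * (∫ y, K n y * Real.log (K n y)) + w n * Real.log (w n)
          + w n * ε' n
          + w n * (Real.log ((⨆ m, ⨆ x, K m x) / (w n * ⨆ x, K n x)) + 1) * ε n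
          + ((∫ y in Ω n, p y) - w n) := by
      intro n
      rw [hlogsplit n]
      field_simp [(hwpos n).ne']
      ring
    have h2 : ∑ n, w n * ((∫ y, K n y * Real.log (K n y)) + ε' n
            - ε n * Real.log (⨆ x, K n x) + Real.log (w n) * (1 - ε n)
            + Real.log (⨆ m, ⨆ x, K m x) * ε n
            + ((∫ y in Ω n, p y) / w n - (1 - ε n)))
        = (∑ n, w n * ∫ y, K n y * Real.log (K n y)) + (∑ n, w n * Real.log (w n))
          + (∑ n, w n * ε' n)
          + (∑ n, w n * (Real.log ((⨆ m, ⨆ x, K m x) / (w n * ⨆ x, K n x)) + 1) * ε n)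
          + ((∑ n, ∫ y in Ω n, p y) - 1) := by
      rw [Finset.sum_congr rfl (fun n _ => hper n)]
      rw [← hwsum]
      simp only [Finset.sum_add_distrib, Finset.sum_sub_distrib]
    rw [h2] at h1
    linarith [hPsum, h1]
  have hneg : ∑ n, w n * (-∫ y, K n y * Real.log (K n y))
      = -∑ n, w n * ∫ y, K n y * Real.log (K n y) := by
    simp [mul_neg, Finset.sum_neg_distrib]
  rw [hneg]
  linarith [key]
end

section
/- Let p = Σ_{n=1}^N π_n K_n with K_n(y) = (1/σ_n)K((y−μ_n)/σ_n), K a bounded density of finite entropy, μ_1 < … < μ_N, and d_n = min(μ_n − μ_{n−1}, μ_{n+1} − μ_n) (with μ_0 = −∞, μ_{N+1} = +∞). Then H(p) ≤ H(K) + Σ_n π_n log σ_n + h(π), and H(p) converges to this upper bound as min_n (d_n/σ_n) → ∞. -/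
open MeasureTheory Real

lemma log_one_add_le_sqrt {t : ℝ} (ht : 0 ≤ t) : Real.log (1 + t) ≤ Real.sqrt t := by
  set u := Real.sqrt t with hu
  have hu0 : 0 ≤ u := Real.sqrt_nonneg t
  have hut : u ^ 2 = t := Real.sq_sqrt ht
  have h6 : 1 + t ≤ (1 + u / 6) ^ 6 := by nlinarith [sq_nonneg (u - 2), sq_nonneg (u - 3), sq_nonneg u, pow_nonneg hu0 3, pow_nonneg hu0 4, pow_nonneg hu0 5, pow_nonneg hu0 6, sq_nonneg (u*u - 2*u)]
  have hx : (0:ℝ) < 1 + u / 6 := by linarith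
  calc Real.log (1 + t) ≤ Real.log ((1 + u / 6) ^ 6) :=
        Real.log_le_log (by linarith) h6
    _ = 6 * Real.log (1 + u / 6) := by rw [Real.log_pow]; push_cast; ring
    _ ≤ 6 * (u / 6) := by
        have := Real.log_le_sub_one_of_pos hx
        nlinarith
    _ = u := by ring

-- a (log(a+b) - log a) ≤ √(a b) for a,b ≥ 0
lemma mul_log_add_sub_log_le_sqrt {a b : ℝ} (ha : 0 ≤ a) (hb : 0 ≤ b) :
    a * (Real.log (a + b) - Real.log a) ≤ Real.sqrt (a * b) := by
  rcases eq_or_lt_of_le ha with h | hapos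
  · simp [← h]
  · have h1 : Real.log (a + b) - Real.log a = Real.log (1 + b / a) := by
      rw [← Real.log_div (by positivity) (ne_of_gt hapos)]
      congr 1
      field_simp
    rw [h1]
    have h2 : Real.log (1 + b / a) ≤ Real.sqrt (b / a) := log_one_add_le_sqrt (by positivity)
    calc a * Real.log (1 + b / a) ≤ a * Real.sqrt (b / a) := by
          exact mul_le_mul_of_nonneg_left h2 ha
      _ = Real.sqrt (a * b) := by
          rw [show a * b = a ^ 2 * (b / a) by field_simp, Real.sqrt_mul (by positivity),
            Real.sqrt_sq ha]

-- AM-GM: √(a b) ≤ (a + b)/2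
lemma sqrt_mul_le_half_add {a b : ℝ} (ha : 0 ≤ a) (hb : 0 ≤ b) :
    Real.sqrt (a * b) ≤ (a + b) / 2 := by
  rw [Real.sqrt_mul ha]
  nlinarith [sq_nonneg (Real.sqrt a - Real.sqrt b), Real.sq_sqrt ha, Real.sq_sqrt hb,
    Real.sqrt_nonneg a, Real.sqrt_nonneg b]

-- change of variables
lemma integrable_affine {g : ℝ → ℝ} (hg : Integrable g) (μ : ℝ) {σ : ℝ} (hσ : 0 < σ) :
    Integrable (fun y => g ((y - μ) / σ)) := by
  have : Integrable (fun z : ℝ => g (z / σ)) := hg.comp_div hσ.ne'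
  exact this.comp_sub_right μ

lemma integral_affine (g : ℝ → ℝ) (μ : ℝ) {σ : ℝ} (hσ : 0 < σ) :
    ∫ y, g ((y - μ) / σ) = σ * ∫ x, g x := by
  have h1 : ∫ y, g ((y - μ) / σ) = ∫ y, (fun z => g (z / σ)) (y - μ) := rfl
  rw [h1, integral_sub_right_eq_self (fun z => g (z / σ)) μ,
    MeasureTheory.Measure.integral_comp_div (fun x => g x) σ, abs_of_pos hσ, smul_eq_mul]

lemma flogcf_pointwise {K : ℝ → ℝ} (hKnonneg : ∀ x, 0 ≤ K x) {c : ℝ} (hc : 0 < c) :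
    (fun x => K x * Real.log (c * K x)) = fun x => K x * Real.log c + K x * Real.log (K x) := by
  funext x
  rcases eq_or_lt_of_le (hKnonneg x) with h | h
  · simp [← h]
  · rw [Real.log_mul hc.ne' h.ne']; ring

lemma flogcf_integrable {K : ℝ → ℝ} (hKnonneg : ∀ x, 0 ≤ K x) (hK : Integrable K)
    (hKent : Integrable (fun x => K x * Real.log (K x))) {c : ℝ} (hc : 0 < c) :
    Integrable (fun x => K x * Real.log (c * K x)) := by
  rw [flogcf_pointwise hKnonneg hc]
  exact (hK.mul_const _).add hKent

lemma flogcf_integral {K : ℝ → ℝ} (hKnonneg : ∀ x, 0 ≤ K x) (hK : Integrable K)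
    (hKdens : ∫ x, K x = 1) (hKent : Integrable (fun x => K x * Real.log (K x)))
    {c : ℝ} (hc : 0 < c) :
    ∫ x, K x * Real.log (c * K x) = Real.log c + ∫ x, K x * Real.log (K x) := by
  rw [flogcf_pointwise hKnonneg hc, integral_add (hK.mul_const _) hKent,
    integral_mul_const, hKdens, one_mul]

/-- main lemma about each mixture component's entropy integral -/
lemma component_integrable {K : ℝ → ℝ} (hKnonneg : ∀ x, 0 ≤ K x) (hK : Integrable K)
    (hKent : Integrable (fun x => K x * Real.log (K x))) {c : ℝ} (hc : 0 < c)
    (μ : ℝ) {σ : ℝ} (hσ : 0 < σ) :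
    Integrable (fun y => σ⁻¹ * K ((y - μ) / σ) * Real.log (c * (σ⁻¹ * K ((y - μ) / σ)))) := by
  have h : (fun y => σ⁻¹ * K ((y - μ) / σ) * Real.log (c * (σ⁻¹ * K ((y - μ) / σ))))
      = fun y => (fun x => σ⁻¹ * (K x * Real.log (c * σ⁻¹ * K x))) ((y - μ) / σ) := by
    funext y; simp only []; ring_nf
  rw [h]
  exact integrable_affine ((flogcf_integrable hKnonneg hK hKent
    (by positivity : (0:ℝ) < c * σ⁻¹)).const_mul _) μ hσ

lemma component_integral {K : ℝ → ℝ} (hKnonneg : ∀ x, 0 ≤ K x) (hK : Integrable K)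
    (hKdens : ∫ x, K x = 1) (hKent : Integrable (fun x => K x * Real.log (K x)))
    {c : ℝ} (hc : 0 < c) (μ : ℝ) {σ : ℝ} (hσ : 0 < σ) :
    ∫ y, σ⁻¹ * K ((y - μ) / σ) * Real.log (c * (σ⁻¹ * K ((y - μ) / σ)))
      = (∫ x, K x * Real.log (K x)) + Real.log c - Real.log σ := by
  have h : (fun y => σ⁻¹ * K ((y - μ) / σ) * Real.log (c * (σ⁻¹ * K ((y - μ) / σ))))
      = fun y => (fun x => σ⁻¹ * (K x * Real.log (c * σ⁻¹ * K x))) ((y - μ) / σ) := by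
    funext y; simp only []; ring_nf
  rw [h]
  rw [integral_affine (fun x => σ⁻¹ * (K x * Real.log (c * σ⁻¹ * K x))) μ hσ]
  rw [integral_const_mul, ← mul_assoc, mul_inv_cancel₀ hσ.ne', one_mul,
    flogcf_integral hKnonneg hK hKdens hKent (by positivity)]
  rw [Real.log_mul hc.ne' (by positivity), Real.log_inv]
  ring

open Filter Topology in
lemma tail_small {K : ℝ → ℝ} (hK : Integrable K) (hKdens : ∫ x, K x = 1) {δ : ℝ} (hδ : 0 < δ) :
    ∃ M : ℝ, 0 < M ∧ ∫ x, Set.indicator {x : ℝ | M / 2 ≤ |x|} K x < δ := by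
  have hta : Tendsto (fun M : ℝ => -(M / 2)) atTop atBot := by
    apply Filter.tendsto_neg_atTop_atBot.comp
    exact Filter.tendsto_id.atTop_div_const two_pos
  have htb : Tendsto (fun M : ℝ => M / 2) atTop atTop :=
    Filter.tendsto_id.atTop_div_const two_pos
  have ht : Tendsto (fun M : ℝ => ∫ x in (-(M / 2))..(M / 2), K x) atTop (𝓝 1) := by
    rw [← hKdens]
    exact intervalIntegral_tendsto_integral hK hta htb
  have hev : ∀ᶠ M : ℝ in atTop, 1 - δ < ∫ x in (-(M / 2))..(M / 2), K x :=
    ht.eventually (eventually_gt_nhds (by linarith))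
  obtain ⟨M, hM1, hM2⟩ := ((eventually_ge_atTop (1:ℝ)).and hev).exists
  refine ⟨M, by linarith, ?_⟩
  have hSmeas : MeasurableSet {x : ℝ | M / 2 ≤ |x|} :=
    measurableSet_le measurable_const continuous_abs.measurable
  have hcompl : {x : ℝ | M / 2 ≤ |x|}ᶜ = Set.Ioo (-(M / 2)) (M / 2) := by
    ext x
    simp [Set.mem_Ioo, not_le, abs_lt]
  have hsplit := MeasureTheory.integral_add_compl hSmeas hK
  rw [hcompl] at hsplit
  have hIoc : ∫ x in (-(M / 2))..(M / 2), K x = ∫ x in Set.Ioo (-(M / 2)) (M / 2), K x := by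
    rw [intervalIntegral.integral_of_le (by linarith), MeasureTheory.integral_Ioc_eq_integral_Ioo]
  rw [MeasureTheory.integral_indicator hSmeas]
  rw [hIoc] at hM2
  rw [hKdens] at hsplit
  linarith

theorem part1 (N : ℕ) (w : Fin N → ℝ)
    (hwpos : ∀ n, 0 < w n) (hwsum : ∑ n, w n = 1)
    (K : ℝ → ℝ) (hKnonneg : ∀ x, 0 ≤ K x) (hK : Integrable K) (hKdens : ∫ x, K x = 1)
    (hKent : Integrable (fun x => K x * Real.log (K x)))
    (μ σ : Fin N → ℝ) (hσ : ∀ n, 0 < σ n)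
    (hpint : Integrable (fun y => (∑ n, w n * ((σ n)⁻¹ * K ((y - μ n) / σ n))) *
        Real.log (∑ n, w n * ((σ n)⁻¹ * K ((y - μ n) / σ n))))) :
    ∑ n, w n * ((∫ x, K x * Real.log (K x)) + Real.log (w n) - Real.log (σ n))
      ≤ ∫ y, (∑ n, w n * ((σ n)⁻¹ * K ((y - μ n) / σ n))) *
          Real.log (∑ n, w n * ((σ n)⁻¹ * K ((y - μ n) / σ n))) := by
  set f : Fin N → ℝ → ℝ := fun n y => (σ n)⁻¹ * K ((y - μ n) / σ n) with hf
  set p : ℝ → ℝ := fun y => ∑ n, w n * f n y with hp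
  have hf_nonneg : ∀ n y, 0 ≤ f n y := fun n y =>
    mul_nonneg (inv_nonneg.2 (hσ n).le) (hKnonneg _)
  have hwf_le_p : ∀ n y, w n * f n y ≤ p y := fun n y =>
    Finset.single_le_sum (fun m _ => mul_nonneg (hwpos m).le (hf_nonneg m y))
      (Finset.mem_univ n)
  have hcomp : ∀ n, Integrable (fun y => w n * (f n y * Real.log (w n * f n y))) := fun n =>
    (component_integrable hKnonneg hK hKent (hwpos n) (μ n) (hσ n)).const_mul (w n)
  have hptwise : ∀ y, ∑ n, w n * (f n y * Real.log (w n * f n y)) ≤ p y * Real.log (p y) := by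
    intro y
    have hps : p y * Real.log (p y) = ∑ n, w n * f n y * Real.log (p y) := by
      rw [hp]; rw [← Finset.sum_mul]
    rw [hps]
    refine Finset.sum_le_sum fun n _ => ?_
    rcases eq_or_lt_of_le (hf_nonneg n y) with h | h
    · simp [← h]
    · have hwf : 0 < w n * f n y := mul_pos (hwpos n) h
      have hlog : Real.log (w n * f n y) ≤ Real.log (p y) :=
        Real.log_le_log hwf (hwf_le_p n y)
      calc w n * (f n y * Real.log (w n * f n y))
          = (w n * f n y) * Real.log (w n * f n y) := by ring
        _ ≤ (w n * f n y) * Real.log (p y) := mul_le_mul_of_nonneg_left hlog hwf.le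
  have hmono := integral_mono (integrable_finset_sum Finset.univ fun n _ => hcomp n) hpint hptwise
  rw [integral_finset_sum Finset.univ fun n _ => hcomp n] at hmono
  calc ∑ n, w n * ((∫ x, K x * Real.log (K x)) + Real.log (w n) - Real.log (σ n))
      = ∑ n, ∫ y, w n * (f n y * Real.log (w n * f n y)) := by
        refine Finset.sum_congr rfl fun n _ => ?_
        rw [integral_const_mul]
        rw [component_integral hKnonneg hK hKdens hKent (hwpos n) (μ n) (hσ n)]
    _ ≤ _ := hmono

theorem part2core (N : ℕ) (w : Fin N → ℝ)
    (hwpos : ∀ n, 0 < w n) (hwsum : ∑ n, w n = 1)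
    (K : ℝ → ℝ) (hKnonneg : ∀ x, 0 ≤ K x) (hK : Integrable K) (hKdens : ∫ x, K x = 1)
    (hKent : Integrable (fun x => K x * Real.log (K x)))
    (μ σ : Fin N → ℝ) (hσ : ∀ n, 0 < σ n)
    (hpint : Integrable (fun y => (∑ n, w n * ((σ n)⁻¹ * K ((y - μ n) / σ n))) *
        Real.log (∑ n, w n * ((σ n)⁻¹ * K ((y - μ n) / σ n)))))
    (M s : ℝ) (hM : 0 < M) (hs : 0 < s)
    (hsep : ∀ n m, n ≠ m → M * σ n ≤ |μ n - μ m|) :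
    (∫ y, (∑ n, w n * ((σ n)⁻¹ * K ((y - μ n) / σ n))) *
        Real.log (∑ n, w n * ((σ n)⁻¹ * K ((y - μ n) / σ n))))
      ≤ (∑ n, w n * ((∫ x, K x * Real.log (K x)) + Real.log (w n) - Real.log (σ n)))
        + N * (s + (∫ x, Set.indicator {x : ℝ | M / 2 ≤ |x|} K x) / s) := by
  set f : Fin N → ℝ → ℝ := fun n y => (σ n)⁻¹ * K ((y - μ n) / σ n) with hf
  set p : ℝ → ℝ := fun y => ∑ n, w n * f n y with hp
  set S : Set ℝ := {x : ℝ | M / 2 ≤ |x|} with hS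
  set τ : ℝ := ∫ x, Set.indicator S K x with hτ
  set Ω : Fin N → Set ℝ := fun n => Metric.ball (μ n) (M * σ n / 2) with hΩ
  set q : Fin N → ℝ → ℝ := fun n y => p y - w n * f n y with hq
  -- basic facts
  have hw1 : ∀ n, w n ≤ 1 := by
    intro n
    rw [← hwsum]
    exact Finset.single_le_sum (fun m _ => (hwpos m).le) (Finset.mem_univ n)
  have hSmeas : MeasurableSet S := measurableSet_le measurable_const continuous_abs.measurable
  have hτ_nonneg : 0 ≤ τ :=
    integral_nonneg fun x => Set.indicator_nonneg (fun a _ => hKnonneg a) x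
  have hΩmeas : ∀ n, MeasurableSet (Ω n) := fun n => measurableSet_ball
  have hf_nonneg : ∀ n y, 0 ≤ f n y := fun n y =>
    mul_nonneg (inv_nonneg.2 (hσ n).le) (hKnonneg _)
  have hf_int : ∀ n, Integrable (f n) := fun n =>
    (integrable_affine hK (μ n) (hσ n)).const_mul _
  have hf_one : ∀ n, ∫ y, f n y = 1 := by
    intro n
    rw [hf]
    simp only []
    rw [integral_const_mul, integral_affine K (μ n) (hσ n), hKdens, mul_one,
      inv_mul_cancel₀ (hσ n).ne']
  have hwf_le_p : ∀ n y, w n * f n y ≤ p y := fun n y =>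
    Finset.single_le_sum (fun m _ => mul_nonneg (hwpos m).le (hf_nonneg m y))
      (Finset.mem_univ n)
  have hp_int : Integrable p :=
    integrable_finset_sum _ fun n _ => (hf_int n).const_mul _
  have hp_one : ∫ y, p y = 1 := by
    rw [hp, integral_finset_sum _ fun n _ => (hf_int n).const_mul _]
    calc ∑ n, ∫ y, w n * f n y = ∑ n, w n := by
          refine Finset.sum_congr rfl fun n _ => ?_
          rw [integral_const_mul, hf_one n, mul_one]
      _ = 1 := hwsum
  have hq_int : ∀ n, Integrable (q n) := fun n => hp_int.sub ((hf_int n).const_mul _)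
  have hq_nonneg : ∀ n y, 0 ≤ q n y := fun n y => sub_nonneg.2 (hwf_le_p n y)
  have hq_sum : ∀ n y, q n y = ∑ m ∈ Finset.univ.erase n, w m * f m y := by
    intro n y
    have h := Finset.add_sum_erase Finset.univ (fun m => w m * f m y) (Finset.mem_univ n)
    rw [hq]
    simp only [hp]
    linarith [h]
  have hq_one : ∀ n, ∫ y, q n y = 1 - w n := by
    intro n
    rw [hq]
    simp only []
    rw [integral_sub hp_int ((hf_int n).const_mul _), hp_one, integral_const_mul, hf_one n,
      mul_one]
  -- geometry
  have hsub : ∀ m n, m ≠ n → Ω n ⊆ (Ω m)ᶜ := by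
    intro m n hmn y hyn hym
    rw [hΩ] at hyn hym
    simp only [Metric.mem_ball, Real.dist_eq] at hyn hym
    have h1 := hsep n m hmn.symm
    have h2 := hsep m n hmn
    have : |μ n - μ m| ≤ |μ n - y| + |y - μ m| := by
      calc |μ n - μ m| = |(μ n - y) + (y - μ m)| := by ring_nf
        _ ≤ _ := abs_add_le _ _
    rw [abs_sub_comm (μ n) y] at this
    rw [abs_sub_comm (μ m) (μ n)] at h2
    linarith
  have hmem : ∀ n y, y ∉ Ω n ↔ M / 2 ≤ |(y - μ n) / σ n| := by
    intro n y
    rw [hΩ]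
    simp only [Metric.mem_ball, Real.dist_eq, not_lt]
    rw [abs_div, abs_of_pos (hσ n), le_div_iff₀ (hσ n)]
    constructor <;> intro h <;> linarith
  -- indicator integrals
  have hfc : ∀ n, (fun y => Set.indicator (Ω n)ᶜ (f n) y)
      = fun y => (σ n)⁻¹ * Set.indicator S K ((y - μ n) / σ n) := by
    intro n
    funext y
    by_cases hy : y ∈ Ω n
    · rw [Set.indicator_of_notMem (by simpa using hy)]
      have hns : (y - μ n) / σ n ∉ S := fun hmem' => ((hmem n y).2 hmem') hy
      rw [Set.indicator_of_notMem hns, mul_zero]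
    · have hSy : (y - μ n) / σ n ∈ S := (hmem n y).1 hy
      rw [Set.indicator_of_mem (show y ∈ (Ω n)ᶜ by simpa using hy),
        Set.indicator_of_mem hSy]
  have hτf : ∀ n, ∫ y, Set.indicator (Ω n)ᶜ (f n) y = τ := by
    intro n
    rw [hfc n]
    rw [integral_const_mul]
    rw [integral_affine (fun x => Set.indicator S K x) (μ n) (hσ n)]
    rw [← mul_assoc, inv_mul_cancel₀ (hσ n).ne', one_mul, hτ]
  have hind_f : ∀ n, Integrable (Set.indicator (Ω n) (f n)) := fun n =>
    (hf_int n).indicator (hΩmeas n)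
  have hind_fc : ∀ n, Integrable (Set.indicator (Ω n)ᶜ (f n)) := fun n =>
    (hf_int n).indicator (hΩmeas n).compl
  have hind_q : ∀ n, Integrable (Set.indicator (Ω n) (q n)) := fun n =>
    (hq_int n).indicator (hΩmeas n)
  have hind_qc : ∀ n, Integrable (Set.indicator (Ω n)ᶜ (q n)) := fun n =>
    (hq_int n).indicator (hΩmeas n).compl
  have hIf : ∀ n, ∫ y, Set.indicator (Ω n) (f n) y ≤ 1 := by
    intro n
    rw [← hf_one n]
    exact integral_mono (hind_f n) (hf_int n)
      (Set.indicator_le_self' fun y _ => hf_nonneg n y)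
  have hIqc : ∀ n, ∫ y, Set.indicator (Ω n)ᶜ (q n) y ≤ 1 := by
    intro n
    have h1 : ∫ y, Set.indicator (Ω n)ᶜ (q n) y ≤ ∫ y, q n y :=
      integral_mono (hind_qc n) (hq_int n)
        (Set.indicator_le_self' fun y _ => hq_nonneg n y)
    rw [hq_one n] at h1
    linarith [(hwpos n)]
  have hIq : ∀ n, ∫ y, Set.indicator (Ω n) (q n) y ≤ τ := by
    intro n
    have hptw : ∀ y, Set.indicator (Ω n) (q n) y
        ≤ ∑ m ∈ Finset.univ.erase n, w m * Set.indicator (Ω m)ᶜ (f m) y := by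
      intro y
      by_cases hy : y ∈ Ω n
      · rw [Set.indicator_of_mem hy, hq_sum n y]
        refine Finset.sum_le_sum fun m hm => ?_
        have hmn : m ≠ n := Finset.ne_of_mem_erase hm
        rw [Set.indicator_of_mem (hsub m n hmn hy)]
      · rw [Set.indicator_of_notMem hy]
        exact Finset.sum_nonneg fun m _ => mul_nonneg (hwpos m).le
          (Set.indicator_nonneg (fun a _ => hf_nonneg m a) y)
    have hint : Integrable (fun y => ∑ m ∈ Finset.univ.erase n,
        w m * Set.indicator (Ω m)ᶜ (f m) y) :=
      integrable_finset_sum _ fun m _ => (hind_fc m).const_mul _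
    have h1 := integral_mono (hind_q n) hint hptw
    rw [integral_finset_sum _ fun m _ => (hind_fc m).const_mul _] at h1
    have h2 : ∑ m ∈ Finset.univ.erase n, ∫ y, w m * Set.indicator (Ω m)ᶜ (f m) y
        = ∑ m ∈ Finset.univ.erase n, w m * τ := by
      refine Finset.sum_congr rfl fun m _ => ?_
      rw [integral_const_mul, hτf m]
    rw [h2] at h1
    calc ∫ y, Set.indicator (Ω n) (q n) y ≤ ∑ m ∈ Finset.univ.erase n, w m * τ := h1
      _ ≤ ∑ m, w m * τ := Finset.sum_le_sum_of_subset_of_nonneg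
          (Finset.erase_subset _ _) (fun m _ _ => mul_nonneg (hwpos m).le hτ_nonneg)
      _ = τ := by rw [← Finset.sum_mul, hwsum, one_mul]
  -- the majorant G
  set G : Fin N → ℝ → ℝ := fun n y =>
    (s * Set.indicator (Ω n) (f n) y + s⁻¹ * Set.indicator (Ω n) (q n) y
      + s⁻¹ * Set.indicator (Ω n)ᶜ (f n) y + s * Set.indicator (Ω n)ᶜ (q n) y) / 2 with hG
  have hG_int : ∀ n, Integrable (G n) := fun n =>
    (((((hind_f n).const_mul s).add ((hind_q n).const_mul s⁻¹)).add
      ((hind_fc n).const_mul s⁻¹)).add ((hind_qc n).const_mul s)).div_const 2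
  have hG_val : ∀ n, ∫ y, G n y ≤ s + τ / s := by
    intro n
    rw [hG]
    simp only []
    have i1 : Integrable (fun y => s * Set.indicator (Ω n) (f n) y) := (hind_f n).const_mul s
    have i2 : Integrable (fun y => s⁻¹ * Set.indicator (Ω n) (q n) y) :=
      (hind_q n).const_mul s⁻¹
    have i3 : Integrable (fun y => s⁻¹ * Set.indicator (Ω n)ᶜ (f n) y) :=
      (hind_fc n).const_mul s⁻¹
    have i4 : Integrable (fun y => s * Set.indicator (Ω n)ᶜ (q n) y) :=
      (hind_qc n).const_mul s
    have i12 : Integrable (fun y => s * Set.indicator (Ω n) (f n) y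
        + s⁻¹ * Set.indicator (Ω n) (q n) y) := i1.add i2
    have i123 : Integrable (fun y => s * Set.indicator (Ω n) (f n) y
        + s⁻¹ * Set.indicator (Ω n) (q n) y + s⁻¹ * Set.indicator (Ω n)ᶜ (f n) y) := i12.add i3
    rw [integral_div, integral_add i123 i4, integral_add i12 i3, integral_add i1 i2,
      integral_const_mul, integral_const_mul, integral_const_mul, integral_const_mul]
    have h1 : s * ∫ y, Set.indicator (Ω n) (f n) y ≤ s * 1 :=
      mul_le_mul_of_nonneg_left (hIf n) hs.le
    have h2 : s⁻¹ * ∫ y, Set.indicator (Ω n) (q n) y ≤ s⁻¹ * τ :=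
      mul_le_mul_of_nonneg_left (hIq n) (inv_nonneg.2 hs.le)
    have h3 : s⁻¹ * ∫ y, Set.indicator (Ω n)ᶜ (f n) y = s⁻¹ * τ := by rw [hτf n]
    have h4 : s * ∫ y, Set.indicator (Ω n)ᶜ (q n) y ≤ s * 1 :=
      mul_le_mul_of_nonneg_left (hIqc n) hs.le
    have heq : (s * 1 + s⁻¹ * τ + s⁻¹ * τ + s * 1) / 2 = s + τ / s := by
      field_simp
      ring
    linarith
  have hsqrtG : ∀ n y, Real.sqrt (f n y * q n y) ≤ G n y := by
    intro n y
    rw [hG]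
    simp only []
    by_cases hy : y ∈ Ω n
    · rw [Set.indicator_of_mem hy, Set.indicator_of_mem hy,
        Set.indicator_of_notMem (by simpa using hy),
        Set.indicator_of_notMem (by simpa using hy), mul_zero, mul_zero, add_zero, add_zero]
      have : f n y * q n y = (s * f n y) * (s⁻¹ * q n y) := by
        field_simp
      rw [this]
      exact sqrt_mul_le_half_add (mul_nonneg hs.le (hf_nonneg n y))
        (mul_nonneg (inv_nonneg.2 hs.le) (hq_nonneg n y))
    · rw [Set.indicator_of_notMem hy, Set.indicator_of_notMem hy,
        Set.indicator_of_mem (by simpa using hy), Set.indicator_of_mem (by simpa using hy),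
        mul_zero, mul_zero, zero_add, zero_add]
      have : f n y * q n y = (s⁻¹ * f n y) * (s * q n y) := by
        field_simp
      rw [this]
      exact sqrt_mul_le_half_add (mul_nonneg (inv_nonneg.2 hs.le) (hf_nonneg n y))
        (mul_nonneg hs.le (hq_nonneg n y))
  -- pointwise main inequality
  have hcomp : ∀ n, Integrable (fun y => w n * (f n y * Real.log (w n * f n y))) := fun n =>
    (component_integrable hKnonneg hK hKent (hwpos n) (μ n) (hσ n)).const_mul (w n)
  have hptwise : ∀ y, p y * Real.log (p y)
      ≤ ∑ n, (w n * (f n y * Real.log (w n * f n y)) + G n y) := by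
    intro y
    have hps : p y * Real.log (p y) = ∑ n, w n * f n y * Real.log (p y) := by
      rw [hp]; rw [← Finset.sum_mul]
    rw [hps]
    refine Finset.sum_le_sum fun n _ => ?_
    have hab : w n * f n y + q n y = p y := by rw [hq]; ring
    have key := mul_log_add_sub_log_le_sqrt
      (mul_nonneg (hwpos n).le (hf_nonneg n y)) (hq_nonneg n y)
    rw [hab] at key
    have hsq1 : Real.sqrt (w n * f n y * q n y) ≤ Real.sqrt (f n y * q n y) := by
      apply Real.sqrt_le_sqrt
      have : w n * f n y ≤ f n y := by
        nlinarith [hf_nonneg n y, hw1 n, hwpos n]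
      exact mul_le_mul_of_nonneg_right this (hq_nonneg n y)
    have := hsqrtG n y
    nlinarith [key, hsq1, this]
  -- integrate
  have hterm : ∀ n ∈ Finset.univ, Integrable
      (fun y => w n * (f n y * Real.log (w n * f n y)) + G n y) :=
    fun n _ => (hcomp n).add (hG_int n)
  have hRint : Integrable (fun y => ∑ n, (w n * (f n y * Real.log (w n * f n y)) + G n y)) :=
    integrable_finset_sum _ hterm
  have hmono := integral_mono hpint hRint hptwise
  rw [integral_finset_sum _ hterm] at hmono
  calc (∫ y, p y * Real.log (p y))
      ≤ ∑ n, ∫ y, (w n * (f n y * Real.log (w n * f n y)) + G n y) := hmono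
    _ ≤ ∑ n, (w n * ((∫ x, K x * Real.log (K x)) + Real.log (w n) - Real.log (σ n))
          + (s + τ / s)) := by
        refine Finset.sum_le_sum fun n _ => ?_
        rw [integral_add (hcomp n) (hG_int n), integral_const_mul,
          component_integral hKnonneg hK hKdens hKent (hwpos n) (μ n) (hσ n)]
        exact add_le_add_right (hG_val n) _
    _ = (∑ n, w n * ((∫ x, K x * Real.log (K x)) + Real.log (w n) - Real.log (σ n)))
          + N * (s + τ / s) := by
        rw [Finset.sum_add_distrib, Finset.sum_const, Finset.card_univ, Fintype.card_fin,
          nsmul_eq_mul]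

/-- Corollary: the mixture entropy is bounded above by `H(K) + ∑ πₙ log σₙ + h(π)`
and converges to this bound as `minₙ (dₙ/σₙ) → ∞`, where `dₙ` is the distance
from `μₙ` to the nearest other mode center. -/
theorem mixture_entropy_converges_to_upper_bound
    (N : ℕ) (hN : 0 < N) (w : Fin N → ℝ)
    (hwpos : ∀ n, 0 < w n) (hwsum : ∑ n, w n = 1)
    (K : ℝ → ℝ) (hKnonneg : ∀ x, 0 ≤ K x) (hKdens : ∫ x, K x = 1)
    (hKbdd : BddAbove (Set.range K))
    (hKent : Integrable (fun x => K x * Real.log (K x))) :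
    (∀ μ σ : Fin N → ℝ, (∀ n, 0 < σ n) → StrictMono μ →
      Integrable (fun y => (∑ n, w n * ((σ n)⁻¹ * K ((y - μ n) / σ n))) *
        Real.log (∑ n, w n * ((σ n)⁻¹ * K ((y - μ n) / σ n)))) →
      (-∫ y, (∑ n, w n * ((σ n)⁻¹ * K ((y - μ n) / σ n))) *
          Real.log (∑ n, w n * ((σ n)⁻¹ * K ((y - μ n) / σ n)))) ≤
        (-∫ x, K x * Real.log (K x)) + (∑ n, w n * Real.log (σ n)) +
          (-∑ n, w n * Real.log (w n))) ∧
    (∀ ε > (0:ℝ), ∃ M : ℝ, ∀ μ σ : Fin N → ℝ, (∀ n, 0 < σ n) → StrictMono μ →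
      Integrable (fun y => (∑ n, w n * ((σ n)⁻¹ * K ((y - μ n) / σ n))) *
        Real.log (∑ n, w n * ((σ n)⁻¹ * K ((y - μ n) / σ n)))) →
      (∀ n m, n ≠ m → M * σ n ≤ |μ n - μ m|) →
      ((-∫ x, K x * Real.log (K x)) + (∑ n, w n * Real.log (σ n)) +
          (-∑ n, w n * Real.log (w n))) -
        (-∫ y, (∑ n, w n * ((σ n)⁻¹ * K ((y - μ n) / σ n))) *
          Real.log (∑ n, w n * ((σ n)⁻¹ * K ((y - μ n) / σ n)))) < ε) := by
  have hK : Integrable K := by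
    by_contra h
    rw [MeasureTheory.integral_undef h] at hKdens
    norm_num at hKdens
  have hB : ∀ σ : Fin N → ℝ,
      ∑ n, w n * ((∫ x, K x * Real.log (K x)) + Real.log (w n) - Real.log (σ n))
        = (∫ x, K x * Real.log (K x)) + (∑ n, w n * Real.log (w n))
          - (∑ n, w n * Real.log (σ n)) := by
    intro σ
    simp only [mul_sub, mul_add]
    rw [Finset.sum_sub_distrib, Finset.sum_add_distrib, ← Finset.sum_mul, hwsum, one_mul]
  constructor
  · intro μ σ hσ _ hpint
    have h1 := part1 N w hwpos hwsum K hKnonneg hK hKdens hKent μ σ hσ hpint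
    rw [hB σ] at h1
    linarith
  · intro ε hε
    have hNpos : (0:ℝ) < N := by exact_mod_cast hN
    set s : ℝ := ε / (2 * N) with hsdef
    set δ : ℝ := ε ^ 2 / (4 * N ^ 2) with hδdef
    have hs : 0 < s := by positivity
    have hδ : 0 < δ := by positivity
    obtain ⟨M, hM, hτlt⟩ := tail_small hK hKdens hδ
    refine ⟨M, fun μ σ hσ _ hpint hsep => ?_⟩
    have h2 := part2core N w hwpos hwsum K hKnonneg hK hKdens hKent μ σ hσ hpint M s hM hs hsep
    rw [hB σ] at h2
    set τ : ℝ := ∫ x, Set.indicator {x : ℝ | M / 2 ≤ |x|} K x with hτdef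
    have hτ0 : 0 ≤ τ :=
      integral_nonneg fun x => Set.indicator_nonneg (fun a _ => hKnonneg a) x
    have hNs : (N : ℝ) * s = ε / 2 := by
      rw [hsdef]
      field_simp
    have hds : δ / s = ε / (2 * N) := by
      rw [hδdef, hsdef]
      field_simp
      ring
    have h3 : τ / s < δ / s := by gcongr
    have h4 : (N : ℝ) * (τ / s) < (N : ℝ) * (δ / s) := (mul_lt_mul_iff_right₀ hNpos).2 h3
    rw [hds] at h4
    have h5 : (N : ℝ) * (ε / (2 * N)) = ε / 2 := by field_simp
    have hexp : (N : ℝ) * (s + τ / s) = (N : ℝ) * s + (N : ℝ) * (τ / s) := by ring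
    linarith
end

section
/- In the case K = 2: let U be a discrete random vector in ℝ² with finite support 𝒰, and let w* be a unit vector orthogonal to u₁ − u₂ for some distinct u₁, u₂ ∈ 𝒰 with P(U = u₁), P(U = u₂) > 0. Then there is a neighborhood 𝒲 of w* in the unit circle such that h(w·U) = h(U) > h(w*·U) for all w ∈ 𝒲 ∖ {w*}. -/
open MeasureTheory Real
open scoped Classical

abbrev E2 := EuclideanSpace ℝ (Fin 2)


lemma inner2 (x y : E2) : (inner ℝ x y : ℝ) = x 0 * y 0 + x 1 * y 1 := by
  simp [PiLp.inner_apply, Fin.sum_univ_two, RCLike.inner_apply]; ring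

lemma norm2 (x : E2) (hx : ‖x‖ = 1) : x 0 * x 0 + x 1 * x 1 = 1 := by
  have := real_inner_self_eq_norm_mul_norm x
  rw [inner2] at this
  rw [this, hx]; ring

lemma orth_eq (v w a : E2) (hv : v ≠ 0) (hw : ‖w‖ = 1) (ha : ‖a‖ = 1)
    (h1 : (inner ℝ w v : ℝ) = 0) (h2 : (inner ℝ a v : ℝ) = 0) : w = a ∨ w = -a := by
  rw [inner2] at h1 h2
  have hnw := norm2 w hw
  have hna := norm2 a ha
  have hv' : v 0 ≠ 0 ∨ v 1 ≠ 0 := by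
    by_contra h
    push_neg at h
    exact hv (by ext i; fin_cases i <;> simp [h.1, h.2])
  have hdet : w 0 * a 1 - w 1 * a 0 = 0 := by
    rcases hv' with h | h
    · have : (w 0 * a 1 - w 1 * a 0) * v 0 = 0 := by linear_combination a 1 * h1 - w 1 * h2
      exact (mul_eq_zero.mp this).resolve_right h
    · have : (w 0 * a 1 - w 1 * a 0) * v 1 = 0 := by linear_combination w 0 * h2 - a 0 * h1
      exact (mul_eq_zero.mp this).resolve_right h
  have hs : (inner ℝ w a : ℝ) * (inner ℝ w a : ℝ) = 1 := by
    rw [inner2]; nlinarith [hdet, hnw, hna]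
  rcases mul_self_eq_one_iff.mp hs with h | h
  · left; exact (inner_eq_one_iff_of_norm_eq_one (𝕜 := ℝ) hw ha).mp h
  · right
    have hna' : ‖-a‖ = 1 := by rw [norm_neg]; exact ha
    exact (inner_eq_one_iff_of_norm_eq_one (𝕜 := ℝ) hw hna').mp (by rw [inner_neg_right, h]; ring)

-- Part A: injective projection preserves entropy
lemma partA (𝒰 : Finset E2) (P : E2 → ℝ) (w : E2)
    (hinj : ∀ u ∈ 𝒰, ∀ u' ∈ 𝒰, (inner ℝ w u : ℝ) = inner ℝ w u' → u = u') :
    -∑ v ∈ 𝒰.image (fun u => (inner ℝ w u : ℝ)),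
      (∑ u ∈ 𝒰.filter (fun u => (inner ℝ w u : ℝ) = v), P u) *
        Real.log (∑ u ∈ 𝒰.filter (fun u => (inner ℝ w u : ℝ) = v), P u)
      = -∑ u ∈ 𝒰, P u * Real.log (P u) := by
  congr 1
  rw [Finset.sum_image hinj]
  refine Finset.sum_congr rfl fun u hu => ?_
  have : 𝒰.filter (fun u' => (inner ℝ w u' : ℝ) = inner ℝ w u) = {u} := by
    ext x
    simp only [Finset.mem_filter, Finset.mem_singleton]
    constructor
    · rintro ⟨hx, he⟩; exact hinj x hx u hu he
    · rintro rfl; exact ⟨hu, rfl⟩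
  rw [this, Finset.sum_singleton]

-- Part B: merging strictly decreases entropy
lemma partB (𝒰 : Finset E2) (P : E2 → ℝ)
    (hPpos : ∀ u ∈ 𝒰, 0 < P u) (w : E2)
    (u₁ u₂ : E2) (hu₁ : u₁ ∈ 𝒰) (hu₂ : u₂ ∈ 𝒰) (hne : u₁ ≠ u₂)
    (hmerge : (inner ℝ w u₁ : ℝ) = inner ℝ w u₂) :
    -∑ v ∈ 𝒰.image (fun u => (inner ℝ w u : ℝ)),
      (∑ u ∈ 𝒰.filter (fun u => (inner ℝ w u : ℝ) = v), P u) *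
        Real.log (∑ u ∈ 𝒰.filter (fun u => (inner ℝ w u : ℝ) = v), P u)
      < -∑ u ∈ 𝒰, P u * Real.log (P u) := by
  rw [neg_lt_neg_iff]
  have hrw : ∑ u ∈ 𝒰, P u * Real.log (P u)
      = ∑ v ∈ 𝒰.image (fun u => (inner ℝ w u : ℝ)),
          ∑ u ∈ 𝒰.filter (fun u => (inner ℝ w u : ℝ) = v), P u * Real.log (P u) := by
    rw [Finset.sum_fiberwise_of_maps_to (fun u hu => Finset.mem_image_of_mem _ hu)]
  rw [hrw]
  set Q : ℝ → ℝ := fun v => ∑ u ∈ 𝒰.filter (fun u => (inner ℝ w u : ℝ) = v), P u with hQ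
  have hle : ∀ v ∈ 𝒰.image (fun u => (inner ℝ w u : ℝ)), ∀ u ∈ 𝒰.filter (fun u => (inner ℝ w u : ℝ) = v),
      P u * Real.log (P u) ≤ P u * Real.log (Q v) := by
    intro v hv u hu
    have hu' := Finset.mem_filter.mp hu
    have hPu : 0 < P u := hPpos u hu'.1
    have hQv : P u ≤ Q v := Finset.single_le_sum
      (fun x hx => (hPpos x (Finset.mem_filter.mp hx).1).le) hu
    exact mul_le_mul_of_nonneg_left (Real.log_le_log hPu hQv) hPu.le
  have hQlog : ∀ v, Q v * Real.log (Q v)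
      = ∑ u ∈ 𝒰.filter (fun u => (inner ℝ w u : ℝ) = v), P u * Real.log (Q v) := by
    intro v; rw [← Finset.sum_mul]
  apply Finset.sum_lt_sum
  · intro v hv
    rw [hQlog v]
    exact Finset.sum_le_sum (hle v hv)
  · refine ⟨(inner ℝ w u₁ : ℝ), Finset.mem_image_of_mem _ hu₁, ?_⟩
    rw [hQlog]
    set v₀ : ℝ := (inner ℝ w u₁ : ℝ)
    have hm₁ : u₁ ∈ 𝒰.filter (fun u => (inner ℝ w u : ℝ) = v₀) :=
      Finset.mem_filter.mpr ⟨hu₁, rfl⟩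
    have hm₂ : u₂ ∈ 𝒰.filter (fun u => (inner ℝ w u : ℝ) = v₀) :=
      Finset.mem_filter.mpr ⟨hu₂, hmerge.symm⟩
    apply Finset.sum_lt_sum
    · exact fun u hu => hle v₀ (Finset.mem_image_of_mem _ hu₁) u hu
    · refine ⟨u₁, hm₁, ?_⟩
      have hPu₁ : 0 < P u₁ := hPpos u₁ hu₁
      have hlt : P u₁ < Q v₀ := by
        have : ({u₁} : Finset E2) ⊆ 𝒰.filter (fun u => (inner ℝ w u : ℝ) = v₀) := by
          exact Finset.singleton_subset_iff.mpr hm₁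
        calc P u₁ = ∑ u ∈ ({u₁} : Finset E2), P u := by simp
        _ < Q v₀ := Finset.sum_lt_sum_of_subset this hm₂ (Finset.notMem_singleton.mpr (Ne.symm hne))
              (hPpos u₂ hu₂) (fun x hx _ => (hPpos x (Finset.mem_filter.mp hx).1).le)
      exact mul_lt_mul_of_pos_left (Real.log_lt_log hPu₁ hlt) hPu₁


lemma nbhd (𝒰 : Finset E2) (wstar : E2) :
    ∃ ε > (0:ℝ), ∀ w : E2, ‖w - wstar‖ < ε →
      ∀ u ∈ 𝒰, ∀ u' ∈ 𝒰, (inner ℝ wstar (u - u') : ℝ) ≠ 0 → (inner ℝ w (u - u') : ℝ) ≠ 0 := by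
  have hopen : IsOpen {w : E2 | ∀ u ∈ 𝒰, ∀ u' ∈ 𝒰,
      (inner ℝ wstar (u - u') : ℝ) ≠ 0 → (inner ℝ w (u - u') : ℝ) ≠ 0} := by
    have : {w : E2 | ∀ u ∈ 𝒰, ∀ u' ∈ 𝒰,
        (inner ℝ wstar (u - u') : ℝ) ≠ 0 → (inner ℝ w (u - u') : ℝ) ≠ 0}
        = ⋂ u ∈ 𝒰, ⋂ u' ∈ 𝒰, {w : E2 |
          (inner ℝ wstar (u - u') : ℝ) ≠ 0 → (inner ℝ w (u - u') : ℝ) ≠ 0} := by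
      ext w; simp [Set.mem_iInter]
    rw [this]
    refine isOpen_biInter_finset fun u hu => isOpen_biInter_finset fun u' hu' => ?_
    by_cases h : (inner ℝ wstar (u - u') : ℝ) ≠ 0
    · have : {w : E2 | (inner ℝ wstar (u - u') : ℝ) ≠ 0 → (inner ℝ w (u - u') : ℝ) ≠ 0}
          = (fun w : E2 => (inner ℝ w (u - u') : ℝ)) ⁻¹' {0}ᶜ := by
        ext w
        simp only [Set.mem_setOf_eq, Set.mem_preimage, Set.mem_compl_iff,
          Set.mem_singleton_iff]
        exact ⟨fun f => f h, fun b _ => b⟩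
      rw [this]
      exact (isOpen_compl_singleton).preimage (Continuous.inner continuous_id continuous_const)
    · push_neg at h
      have : {w : E2 | (inner ℝ wstar (u - u') : ℝ) ≠ 0 → (inner ℝ w (u - u') : ℝ) ≠ 0}
          = Set.univ := by
        ext w
        simp only [Set.mem_setOf_eq, Set.mem_univ, iff_true]
        exact fun hc => absurd h hc
      rw [this]; exact isOpen_univ
  have hmem : wstar ∈ {w : E2 | ∀ u ∈ 𝒰, ∀ u' ∈ 𝒰,
      (inner ℝ wstar (u - u') : ℝ) ≠ 0 → (inner ℝ w (u - u') : ℝ) ≠ 0} :=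
    fun u _ u' _ h => h
  obtain ⟨ε, hε, hball⟩ := Metric.isOpen_iff.mp hopen wstar hmem
  refine ⟨ε, hε, fun w hw => ?_⟩
  exact hball (by rwa [Metric.mem_ball, dist_eq_norm])

/-- Discrete Shannon entropy of the projection `w·U`. -/
noncomputable def projEntropy (𝒰 : Finset (EuclideanSpace ℝ (Fin 2)))
    (P : EuclideanSpace ℝ (Fin 2) → ℝ) (w : EuclideanSpace ℝ (Fin 2)) : ℝ :=
  -∑ v ∈ 𝒰.image (fun u => (inner ℝ w u : ℝ)),
    (∑ u ∈ 𝒰.filter (fun u => (inner ℝ w u : ℝ) = v), P u) *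
      Real.log (∑ u ∈ 𝒰.filter (fun u => (inner ℝ w u : ℝ) = v), P u)

/-- Case `K = 2` of Lemma 2: near a unit vector `w*` orthogonal to the difference
of two atoms, `h(w·U) = h(U) > h(w*·U)` for all `w ≠ w*` in a neighborhood. -/
theorem discrete_entropy_local_minimum_two_dim
    (𝒰 : Finset (EuclideanSpace ℝ (Fin 2)))
    (P : EuclideanSpace ℝ (Fin 2) → ℝ)
    (hPpos : ∀ u ∈ 𝒰, 0 < P u) (hPsum : ∑ u ∈ 𝒰, P u = 1)
    (u₁ u₂ : EuclideanSpace ℝ (Fin 2)) (hu₁ : u₁ ∈ 𝒰) (hu₂ : u₂ ∈ 𝒰)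
    (hne : u₁ ≠ u₂)
    (wstar : EuclideanSpace ℝ (Fin 2)) (hwstar : ‖wstar‖ = 1)
    (horth : (inner ℝ wstar (u₁ - u₂) : ℝ) = 0) :
    ∃ ε > (0:ℝ), ∀ w : EuclideanSpace ℝ (Fin 2),
      ‖w‖ = 1 → ‖w - wstar‖ < ε → w ≠ wstar →
      projEntropy 𝒰 P w = -∑ u ∈ 𝒰, P u * Real.log (P u) ∧
      projEntropy 𝒰 P wstar < -∑ u ∈ 𝒰, P u * Real.log (P u) := by
  obtain ⟨ε₀, hε₀, hball⟩ := nbhd 𝒰 wstar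
  refine ⟨min ε₀ 1, lt_min hε₀ one_pos, fun w hwnorm hwdist hwne => ?_⟩
  have hmerge : (inner ℝ wstar u₁ : ℝ) = inner ℝ wstar u₂ := by
    rw [inner_sub_right] at horth; linarith
  have hinj : ∀ u ∈ 𝒰, ∀ u' ∈ 𝒰, (inner ℝ w u : ℝ) = inner ℝ w u' → u = u' := by
    intro u hu u' hu' heq
    by_contra hne'
    have hd : u - u' ≠ 0 := sub_ne_zero.mpr hne'
    have hwd : (inner ℝ w (u - u') : ℝ) = 0 := by rw [inner_sub_right, heq, sub_self]
    by_cases hsd : (inner ℝ wstar (u - u') : ℝ) ≠ 0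
    · exact hball w (lt_of_lt_of_le hwdist (min_le_left _ _)) u hu u' hu' hsd hwd
    · push_neg at hsd
      rcases orth_eq (u - u') w wstar hd hwnorm hwstar hwd hsd with h | h
      · exact hwne h
      · have h2 : ‖w - wstar‖ = 2 := by
          rw [h, show (-wstar - wstar : EuclideanSpace ℝ (Fin 2)) = (-2 : ℝ) • wstar by
            module, norm_smul, hwstar]
          norm_num
        have := lt_of_lt_of_le hwdist (min_le_right _ _)
        rw [h2] at this; linarith
  constructor
  · unfold projEntropy
    exact partA 𝒰 P w hinj
  · unfold projEntropy
    exact partB 𝒰 P hPpos wstar u₁ u₂ hu₁ hu₂ hne hmerge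
end
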